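/- The trace of the endomorphism A = S ∘ ⋀^n(J_{2n}) of ⋀^n(ℂ^{2n}) equals (−1)^{n+⌊n/2⌋} · 2^n; in particular tr(A) ≠ 0. -/

import Mathlib

open Matrix

/-- The set of `n`-element subsets of `{1, …, 2n}` (realized as `Fin (2*n)`), indexing the
standard basis `e_I = e_{i₁} ∧ ⋯ ∧ e_{iₙ}` of the `n`-th exterior power `⋀ⁿ(ℂ^{2n})`. -/
abbrev Idx (n : ℕ) := {I : Finset (Fin (2 * n)) // I.card = n}

/-- The matrix of the induced linear map `⋀ⁿ(g)` on `⋀ⁿ(ℂ^{2n})` in the standard basis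
`{e_I}`: its `(I, J)` entry is the `n × n` minor of `g` with rows `I` and columns `J`
(both taken in increasing order), i.e. the coefficient of `e_I` in `⋀ⁿ(g)(e_J)`. -/
noncomputable def wedgePow (n : ℕ) (g : Matrix (Fin (2 * n)) (Fin (2 * n)) ℂ) :
    Matrix (Idx n) (Idx n) ℂ := fun I J =>
  Matrix.det (Matrix.of fun a b : Fin n =>
    g ((I.1.orderIsoOfFin I.2 a).1) ((J.1.orderIsoOfFin J.2 b).1))

/-- `qCoeff n I J = q(e_I, e_J)`, the coefficient of `e_1 ∧ ⋯ ∧ e_{2n}` in `e_I ∧ e_J`: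
it is `0` unless `J = Iᶜ`, in which case it is the sign `(-1)^{#{(i,j) ∈ I × J : i > j}}`
obtained by sorting the concatenation of the increasing enumerations of `I` and `J`. -/
noncomputable def qCoeff (n : ℕ) (I J : Idx n) : ℂ :=
  if (J : Finset (Fin (2 * n))) = (I : Finset (Fin (2 * n)))ᶜ then
    (-1 : ℂ) ^ (((I.1 ×ˢ J.1).filter fun p => p.2 < p.1).card)
  else 0

/-- The bilinear form `q` on `⋀ⁿ(ℂ^{2n})` defined by `v ∧ w = q(v, w) • e_1 ∧ ⋯ ∧ e_{2n}`,
written in coordinates with respect to the basis `{e_I}` (a vector of `⋀ⁿ(ℂ^{2n})` is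
recorded by its coordinate function `Idx n → ℂ`). -/
noncomputable def q (n : ℕ) (v w : Idx n → ℂ) : ℂ :=
  ∑ I : Idx n, ∑ J : Idx n, v I * w J * qCoeff n I J

/-- The basis vector `e_I` of `⋀ⁿ(ℂ^{2n})`, in coordinates. -/
noncomputable def eVec (n : ℕ) (I : Idx n) : Idx n → ℂ :=
  fun J => if J = I then 1 else 0

/-- The complement `Iᶜ` of an `n`-element subset of `{1, …, 2n}`. -/
def complIdx (n : ℕ) (I : Idx n) : Idx n :=
  ⟨(I : Finset (Fin (2 * n)))ᶜ, by
    rw [Finset.card_compl, I.2, Fintype.card_fin]; omega⟩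

/-- The matrix (in the basis `{e_I}`) of the linear map `S` on `⋀ⁿ(ℂ^{2n})` defined by
`S(e_I) = q(e_{Iᶜ}, e_I) • e_{Iᶜ}`. -/
noncomputable def Smat (n : ℕ) : Matrix (Idx n) (Idx n) ℂ := fun I J =>
  if I = complIdx n J then qCoeff n (complIdx n J) J else 0

/-- The `n × n` matrix `w_n` with entries `1` at positions `(i, n+1-i)` and `0` elsewhere. -/
noncomputable def wnMat (n : ℕ) : Matrix (Fin n) (Fin n) ℂ := fun i j =>
  if (i : ℕ) + (j : ℕ) + 1 = n then 1 else 0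

/-- The `2n × 2n` matrix `J_{2n}` with block form `[[0, wₙ], [-wₙ, 0]]`. -/
noncomputable def JMat (n : ℕ) : Matrix (Fin (2 * n)) (Fin (2 * n)) ℂ :=
  Matrix.reindex (finSumFinEquiv.trans (finCongr (by omega)))
    (finSumFinEquiv.trans (finCongr (by omega)))
    (Matrix.fromBlocks 0 (wnMat n) (-(wnMat n)) 0)

/-- The matrix of the endomorphism `A = S ∘ ⋀ⁿ(J_{2n})` of `⋀ⁿ(ℂ^{2n})`. -/
noncomputable def Amat (n : ℕ) : Matrix (Idx n) (Idx n) ℂ :=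
  Smat n * wedgePow n (JMat n)

/- ## auxiliary material -/

open Equiv Equiv.Perm in
theorem sign_revPerm : ∀ n : ℕ, Perm.sign (Fin.revPerm : Perm (Fin n)) = (-1) ^ (n / 2)
  | 0 => by decide
  | 1 => by decide
  | (n+2) => by
    have ih := sign_revPerm n
    set f : Fin n ↪ Fin (n+2) := ⟨fun x => x.succ.castSucc, fun a b h => by
      simpa [Fin.ext_iff] using h⟩ with hf
    have hval : ∀ a : Fin n, (f a : ℕ) = a + 1 := fun a => rfl
    have key : (Fin.revPerm : Perm (Fin (n+2))) =
        Equiv.swap 0 (Fin.last (n+1)) * (Fin.revPerm : Perm (Fin n)).viaFintypeEmbedding f := by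
      ext x
      by_cases hx0 : x = 0
      · subst hx0
        rw [Perm.mul_apply, Perm.viaFintypeEmbedding_apply_notMem_range _ _ (by
          rintro ⟨a, ha⟩
          have h := congrArg Fin.val ha
          rw [hval] at h
          simp only [Fin.val_zero] at h
          omega)]
        simp [Fin.ext_iff, Fin.val_rev]
      · by_cases hxl : x = Fin.last (n+1)
        · subst hxl
          rw [Perm.mul_apply, Perm.viaFintypeEmbedding_apply_notMem_range _ _ (by
            rintro ⟨a, ha⟩
            have h := congrArg Fin.val ha
            rw [hval] at h
            simp only [Fin.val_last] at h
            omega)]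
          simp [Fin.ext_iff, Fin.val_rev]
        · have hx1 : 1 ≤ (x:ℕ) := by
            rcases Nat.eq_zero_or_pos (x:ℕ) with h | h
            · exact absurd (Fin.ext h) hx0
            · exact h
          have hxn : (x:ℕ) ≤ n := by
            have hlt := x.isLt
            rcases Nat.lt_or_ge (x:ℕ) (n+1) with h | h
            · omega
            · exact absurd (Fin.ext (by simp [Fin.val_last]; omega : (x:ℕ) = (Fin.last (n+1) : ℕ))) hxl
          set a : Fin n := ⟨(x:ℕ) - 1, by omega⟩ with ha
          have hxa : x = f a := Fin.ext (by simp only [hval, ha, Fin.val_mk]; omega)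
          rw [hxa, Perm.mul_apply, Perm.viaFintypeEmbedding_apply_image]
          have h2 : (f ((Fin.revPerm : Perm (Fin n)) a) : ℕ) = n - (x:ℕ) + 1 := by
            simp only [hval, Fin.revPerm_apply, Fin.val_rev, ha, Fin.val_mk]
            omega
          rw [swap_apply_of_ne_of_ne (by simp only [Ne, Fin.ext_iff, h2, Fin.val_zero]; omega)
            (by simp only [Ne, Fin.ext_iff, h2, Fin.val_last]; omega)]
          rw [h2]
          simp only [Fin.revPerm_apply, Fin.val_rev, hval, ha, Fin.val_mk]
          omega
    rw [key, Perm.sign_mul, Perm.sign_swap (by simp [Fin.ext_iff]),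
      Perm.viaFintypeEmbedding_sign, ih]
    have h2 : (n+2)/2 = n/2 + 1 := by omega
    rw [h2, pow_succ, mul_comm]


theorem JMat_apply (n : ℕ) (x y : Fin (2*n)) :
    JMat n x y = if x = Fin.rev y then (if (y:ℕ) < n then -1 else 1) else 0 := by
  rw [JMat, Matrix.reindex_apply, Matrix.submatrix_apply]
  set e := (finSumFinEquiv.trans (finCongr (by omega : n + n = 2*n))) with he
  have hval : ∀ z : Fin n ⊕ Fin n, ((e z : Fin (2*n)) : ℕ) = Sum.elim (fun a : Fin n => (a:ℕ)) (fun a : Fin n => n + a) z := by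
    rintro (a | a) <;> simp [he, finSumFinEquiv] <;> omega
  have hrev : ((Fin.rev y : Fin (2*n)) : ℕ) = 2*n - 1 - y := by
    rw [Fin.val_rev]; omega
  rcases hx : e.symm x with a | a <;> rcases hy : e.symm y with b | b <;>
    rw [Equiv.symm_apply_eq] at hx hy <;>
    have hxv := congrArg Fin.val hx <;> have hyv := congrArg Fin.val hy <;>
    rw [hval] at hxv hyv <;> simp only [Sum.elim_inl, Sum.elim_inr] at hxv hyv
  · rw [Matrix.fromBlocks_apply₁₁]
    have h1 : ¬ x = Fin.rev y := by
      rw [Fin.ext_iff, hrev]; omega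
    simp [h1]
  · rw [Matrix.fromBlocks_apply₁₂, wnMat]
    have h2 : (y:ℕ) < n → False := by omega
    have : ((a:ℕ) + (b:ℕ) + 1 = n) ↔ (x = Fin.rev y) := by
      rw [Fin.ext_iff, hrev]; omega
    by_cases hc : x = Fin.rev y
    · rw [if_pos (this.mpr hc), if_pos hc, if_neg (by omega)]
    · rw [if_neg (fun h => hc (this.mp h)), if_neg hc]
  · rw [Matrix.fromBlocks_apply₂₁]
    have : ((a:ℕ) + (b:ℕ) + 1 = n) ↔ (x = Fin.rev y) := by
      rw [Fin.ext_iff, hrev]; omega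
    simp only [Matrix.neg_apply, wnMat]
    by_cases hc : x = Fin.rev y
    · rw [if_pos (this.mpr hc), if_pos hc, if_pos (by omega)]
    · rw [if_neg (fun h => hc (this.mp h)), if_neg hc, neg_zero]
  · rw [Matrix.fromBlocks_apply₂₂]
    have h1 : ¬ x = Fin.rev y := by
      rw [Fin.ext_iff, hrev]; omega
    simp [h1]


/-- `I` picks exactly one element out of each pair `{i, rev i}`. -/
def good (n : ℕ) (I : Idx n) : Prop := ∀ i ∈ I.1, Fin.rev i ∉ I.1

theorem compl_good {n : ℕ} {I : Idx n} (hI : good n I) :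
    (I.1)ᶜ = I.1.image Fin.rev := by
  have hsub : I.1.image Fin.rev ⊆ (I.1)ᶜ := by
    intro j hj
    rcases Finset.mem_image.1 hj with ⟨i, hi, rfl⟩
    exact Finset.mem_compl.2 (hI i hi)
  refine (Finset.eq_of_subset_of_card_le hsub ?_).symm
  rw [Finset.card_image_of_injective _ Fin.rev_injective,
    Finset.card_compl, I.2, Fintype.card_fin]
  omega

theorem complIdx_involutive (n : ℕ) (I : Idx n) : complIdx n (complIdx n I) = I :=
  Subtype.ext (compl_compl _)

theorem orderEmb_compl {n : ℕ} {I : Idx n} (hI : good n I) (a : Fin n) :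
    (complIdx n I).1.orderEmbOfFin (complIdx n I).2 a
      = Fin.rev (I.1.orderEmbOfFin I.2 (Fin.rev a)) := by
  have h := Finset.orderEmbOfFin_unique (complIdx n I).2
    (f := fun a : Fin n => Fin.rev (I.1.orderEmbOfFin I.2 (Fin.rev a)))
    (fun a => Finset.mem_compl.2 (by
      intro hmem
      exact hI _ hmem (by rw [Fin.rev_rev]; exact Finset.orderEmbOfFin_mem _ _ _)))
    (fun a b hab => by
      rw [Fin.rev_lt_rev]
      exact (I.1.orderEmbOfFin I.2).strictMono (by rwa [Fin.rev_lt_rev]))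
  exact (congrFun h a).symm

theorem term_bad {n : ℕ} {I : Idx n} (hI : ¬ good n I) :
    wedgePow n (JMat n) (complIdx n I) I = 0 := by
  rw [good] at hI
  push_neg at hI
  obtain ⟨i, hi, hri⟩ := hI
  rw [wedgePow]
  set b := (I.1.orderIsoOfFin I.2).symm ⟨i, hi⟩ with hb
  apply Matrix.det_eq_zero_of_column_eq_zero b
  intro a
  rw [Matrix.of_apply]
  have hIb : ((I.1.orderIsoOfFin I.2 b).1 : Fin (2*n)) = i := by
    rw [hb, OrderIso.apply_symm_apply]
  rw [hIb, JMat_apply, if_neg]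
  intro h
  have hmem := Finset.orderEmbOfFin_mem (complIdx n I).1 (complIdx n I).2 a
  rw [← Finset.coe_orderIsoOfFin_apply] at hmem
  rw [h] at hmem
  exact (Finset.mem_compl.1 hmem) hri

theorem qcoeff_good {n : ℕ} {I : Idx n} (hI : good n I) :
    qCoeff n I (complIdx n I)
      = (-1:ℂ) ^ (n - (I.1.filter fun i : Fin (2*n) => (i:ℕ) < n).card) := by
  classical
  rw [qCoeff, if_pos (show ((complIdx n I : Idx n) : Finset (Fin (2 * n))) = (I : Finset (Fin (2 * n)))ᶜ from rfl)]
  have hcompl : ((complIdx n I).1 : Finset (Fin (2*n))) = I.1.image Fin.rev := compl_good hI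
  set T : Finset (Fin (2*n) × Fin (2*n)) :=
    (I.1 ×ˢ I.1).filter fun p => Fin.rev p.2 < p.1 with hT
  have hrevlt : ∀ x y : Fin (2*n), Fin.rev y < x ↔ 2*n ≤ (x:ℕ) + (y:ℕ) := by
    intro x y
    rw [Fin.lt_def, Fin.val_rev]
    have := x.isLt; have := y.isLt
    omega
  have h1 : ((I.1 ×ˢ (complIdx n I).1).filter fun p => p.2 < p.1).card = T.card := by
    apply Finset.card_nbij' (i := fun p => (p.1, Fin.rev p.2)) (j := fun p => (p.1, Fin.rev p.2))
    · intro p hp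
      rw [Finset.mem_coe, Finset.mem_filter, Finset.mem_product] at hp ⊢
      obtain ⟨⟨hp1, hp2⟩, hlt⟩ := hp
      refine ⟨⟨hp1, ?_⟩, by rwa [Fin.rev_rev]⟩
      rw [hcompl] at hp2
      rcases Finset.mem_image.1 hp2 with ⟨j, hj, hje⟩
      show Fin.rev p.2 ∈ I.1
      rw [← hje, Fin.rev_rev]
      exact hj
    · intro p hp
      rw [Finset.mem_coe, Finset.mem_filter, Finset.mem_product] at hp ⊢
      obtain ⟨⟨hp1, hp2⟩, hlt⟩ := hp
      refine ⟨⟨hp1, ?_⟩, hlt⟩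
      rw [hcompl]
      exact Finset.mem_image_of_mem _ hp2
    · intro p _; simp [Fin.rev_rev]
    · intro p _; simp [Fin.rev_rev]
  rw [h1]
  have hsplit : T.card = (T.filter fun p => p.1 = p.2).card
      + (T.filter fun p => ¬ p.1 = p.2).card :=
    (Finset.card_filter_add_card_filter_not _).symm
  set S := T.filter fun p => ¬ p.1 = p.2 with hS
  have hoff : S.card = 2 * (S.filter fun p => p.2 < p.1).card := by
    have h2 : (S.filter fun p => p.2 < p.1).card = (S.filter fun p => ¬ p.2 < p.1).card := by
      apply Finset.card_nbij' (i := fun p => (p.2, p.1)) (j := fun p => (p.2, p.1))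
      · intro p hp
        simp only [hS, hT, Finset.mem_coe, Finset.mem_filter, Finset.mem_product] at hp ⊢
        obtain ⟨⟨⟨⟨hp1, hp2⟩, hrev⟩, hne⟩, hlt⟩ := hp
        rw [hrevlt] at hrev ⊢
        refine ⟨⟨⟨⟨hp2, hp1⟩, by omega⟩, fun h => hne h.symm⟩, fun h => ?_⟩
        exact absurd hlt (not_lt.2 (le_of_lt h))
      · intro p hp
        simp only [hS, hT, Finset.mem_coe, Finset.mem_filter, Finset.mem_product] at hp ⊢
        obtain ⟨⟨⟨⟨hp1, hp2⟩, hrev⟩, hne⟩, hnlt⟩ := hp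
        rw [hrevlt] at hrev ⊢
        refine ⟨⟨⟨⟨hp2, hp1⟩, by omega⟩, fun h => hne h.symm⟩, ?_⟩
        exact lt_of_le_of_ne (not_lt.1 hnlt) hne
      · intro p _; rfl
      · intro p _; rfl
    have h3 := Finset.card_filter_add_card_filter_not
      (s := S) (p := fun p => p.2 < p.1)
    omega
  have hdiag : (T.filter fun p => p.1 = p.2).card
      = (I.1.filter fun i : Fin (2*n) => ¬ (i:ℕ) < n).card := by
    apply Finset.card_nbij' (i := fun p => p.1) (j := fun i => (i, i))
    · intro p hp
      simp only [hT, Finset.mem_coe, Finset.mem_filter, Finset.mem_product] at hp ⊢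
      obtain ⟨⟨⟨hp1, hp2⟩, hrev⟩, heq⟩ := hp
      rw [heq] at hrev ⊢
      rw [hrevlt] at hrev
      have := p.2.isLt
      exact ⟨hp2, by omega⟩
    · intro i hi
      simp only [hT, Finset.mem_coe, Finset.mem_filter, Finset.mem_product] at hi ⊢
      obtain ⟨hi1, hi2⟩ := hi
      have := i.isLt
      refine ⟨⟨⟨hi1, hi1⟩, ?_⟩, trivial⟩
      rw [hrevlt]; omega
    · intro p hp
      simp only [hT, Finset.mem_coe, Finset.mem_filter] at hp
      obtain ⟨_, heq⟩ := hp
      exact Prod.ext rfl heq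
    · intro i _; rfl
  have hcards : (I.1.filter fun i : Fin (2*n) => (i:ℕ) < n).card
      + (I.1.filter fun i : Fin (2*n) => ¬ (i:ℕ) < n).card = n := by
    rw [Finset.card_filter_add_card_filter_not, I.2]
  set ℓ := (I.1.filter fun i : Fin (2*n) => (i:ℕ) < n).card
  have hN : T.card = (n - ℓ) + 2 * (S.filter fun p => p.2 < p.1).card := by
    omega
  rw [hN, pow_add, pow_mul, neg_one_sq, one_pow, mul_one]

theorem wedge_good {n : ℕ} {I : Idx n} (hI : good n I) :
    wedgePow n (JMat n) (complIdx n I) I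
      = (-1:ℂ) ^ (n / 2) * (-1:ℂ) ^ ((I.1.filter fun i : Fin (2*n) => (i:ℕ) < n).card) := by
  classical
  set d : Fin n → ℂ :=
    fun b => if ((I.1.orderEmbOfFin I.2 b : Fin (2*n)) : ℕ) < n then (-1:ℂ) else 1 with hd
  have hM : (Matrix.of fun a b : Fin n => JMat n
        (((complIdx n I).1.orderIsoOfFin (complIdx n I).2 a).1) ((I.1.orderIsoOfFin I.2 b).1))
      = (Matrix.diagonal (fun b => d (Fin.rev b))).submatrix id ⇑(Fin.revPerm : Equiv.Perm (Fin n)) := by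
    ext a b
    rw [Matrix.of_apply, Matrix.submatrix_apply, JMat_apply]
    rw [Finset.coe_orderIsoOfFin_apply, Finset.coe_orderIsoOfFin_apply, orderEmb_compl hI]
    have hcond : (Fin.rev (I.1.orderEmbOfFin I.2 (Fin.rev a))
        = Fin.rev (I.1.orderEmbOfFin I.2 b)) ↔ a = Fin.rev b := by
      rw [Fin.rev_inj, (I.1.orderEmbOfFin I.2).injective.eq_iff]
      constructor
      · intro h; rw [← h, Fin.rev_rev]
      · intro h; rw [h, Fin.rev_rev]
    by_cases hc : a = Fin.rev b
    · rw [if_pos (hcond.mpr hc), id_eq, Fin.revPerm_apply, hc, Matrix.diagonal_apply_eq]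
      simp only [hd, Fin.rev_rev]
    · rw [if_neg (fun h => hc (hcond.mp h)), id_eq, Fin.revPerm_apply,
        Matrix.diagonal_apply_ne _ (fun h => hc h)]
  rw [wedgePow, hM, Matrix.det_permute', Matrix.det_diagonal]
  have hprod : (∏ b : Fin n, d (Fin.rev b)) = ∏ b : Fin n, d b := by
    exact Equiv.prod_comp (Fin.revPerm : Equiv.Perm (Fin n)) d
  rw [hprod, sign_revPerm]
  have hprod2 : (∏ b : Fin n, d b)
      = (-1:ℂ) ^ ((Finset.univ.filter fun b : Fin n =>
          ((I.1.orderEmbOfFin I.2 b : Fin (2*n)) : ℕ) < n).card) := by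
    rw [hd]
    rw [Finset.prod_ite]
    simp [Finset.prod_const]
  have hcard : (Finset.univ.filter fun b : Fin n =>
        ((I.1.orderEmbOfFin I.2 b : Fin (2*n)) : ℕ) < n).card
      = (I.1.filter fun i : Fin (2*n) => (i:ℕ) < n).card := by
    apply Finset.card_nbij (i := fun b => I.1.orderEmbOfFin I.2 b)
    · intro b hb
      rw [Finset.mem_coe, Finset.mem_filter] at hb ⊢
      exact ⟨Finset.orderEmbOfFin_mem _ _ _, hb.2⟩
    · intro a _ b _ h
      exact (I.1.orderEmbOfFin I.2).injective h
    · intro i hi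
      rw [Finset.coe_filter] at hi
      obtain ⟨hiI, hilt⟩ := hi
      refine ⟨(I.1.orderIsoOfFin I.2).symm ⟨i, hiI⟩, ?_, ?_⟩
      · simp only [Finset.coe_filter, Set.mem_setOf_eq, Finset.mem_univ, true_and]
        rw [← Finset.coe_orderIsoOfFin_apply, OrderIso.apply_symm_apply]
        exact hilt
      · show (I.1.orderEmbOfFin I.2) _ = i
        rw [← Finset.coe_orderIsoOfFin_apply, OrderIso.apply_symm_apply]
  rw [hprod2, hcard]
  push_cast
  ring

theorem term_good {n : ℕ} {I : Idx n} (hI : good n I) :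
    qCoeff n I (complIdx n I) * wedgePow n (JMat n) (complIdx n I) I
      = (-1:ℂ) ^ (n + n / 2) := by
  rw [qcoeff_good hI, wedge_good hI]
  set ℓ := (I.1.filter fun i : Fin (2*n) => (i:ℕ) < n).card with hℓ
  have hl : ℓ ≤ n := (Finset.card_filter_le _ _).trans_eq I.2
  calc (-1:ℂ)^(n-ℓ) * ((-1:ℂ)^(n/2) * (-1:ℂ)^ℓ)
      = ((-1:ℂ)^(n-ℓ) * (-1:ℂ)^ℓ) * (-1:ℂ)^(n/2) := by ring
    _ = (-1:ℂ)^n * (-1:ℂ)^(n/2) := by rw [← pow_add, Nat.sub_add_cancel hl]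
    _ = (-1:ℂ)^(n+n/2) := by rw [pow_add]


theorem count_good (n : ℕ) [DecidablePred (good n)] :
    (Finset.univ.filter (fun I : Idx n => good n I)).card = 2 ^ n := by
  classical
  have h2n : ∀ k : Fin n, (k:ℕ) < 2*n := fun k => by have := k.isLt; omega
  set lo : Fin n → Fin (2*n) := fun k => ⟨k, h2n k⟩ with hlo
  have hloval : ∀ k, ((lo k : Fin (2*n)) : ℕ) = (k : ℕ) := fun _ => rfl
  have hloinj : Function.Injective lo := fun a b h =>
    Fin.ext (by rw [← hloval a, ← hloval b, h])
  have hrevval : ∀ k : Fin n, ((Fin.rev (lo k) : Fin (2*n)) : ℕ) = 2*n - ((k:ℕ)+1) :=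
    fun k => by rw [Fin.val_rev, hloval]
  set bwd : Finset (Fin n) → Finset (Fin (2*n)) :=
    fun A => A.image lo ∪ (Finset.univ \ A).image (fun k => Fin.rev (lo k)) with hbwd
  have hmemlow : ∀ A (k : Fin n), lo k ∈ bwd A ↔ k ∈ A := by
    intro A k
    rw [hbwd]
    simp only [Finset.mem_union, Finset.mem_image, Finset.mem_sdiff, Finset.mem_univ, true_and]
    constructor
    · rintro (⟨k', hk', he⟩ | ⟨k', _, he⟩)
      · rwa [← hloinj he]
      · have h1 := hrevval k'
        rw [he, hloval] at h1
        have := k.isLt; have := k'.isLt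
        omega
    · intro h; exact Or.inl ⟨k, h, rfl⟩
  have hmemhigh : ∀ A (k : Fin n), Fin.rev (lo k) ∈ bwd A ↔ k ∉ A := by
    intro A k
    rw [hbwd]
    simp only [Finset.mem_union, Finset.mem_image, Finset.mem_sdiff, Finset.mem_univ, true_and]
    constructor
    · rintro (⟨k', _, he⟩ | ⟨k', hk', he⟩)
      · have h1 := hrevval k
        rw [← he, hloval] at h1
        have := k.isLt; have := k'.isLt
        omega
      · rwa [← hloinj (Fin.rev_injective he)]
    · intro h; exact Or.inr ⟨k, h, rfl⟩
  have hbcard : ∀ A : Finset (Fin n), (bwd A).card = n := by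
    intro A
    rw [hbwd]
    rw [Finset.card_union_of_disjoint, Finset.card_image_of_injective _ hloinj,
      Finset.card_image_of_injective _ (show Function.Injective (fun k => Fin.rev (lo k)) from Fin.rev_injective.comp hloinj),
      Finset.card_sdiff_of_subset (Finset.subset_univ A), Finset.card_univ, Fintype.card_fin]
    · have : A.card ≤ n := by
        have := Finset.card_le_card (Finset.subset_univ A)
        rwa [Finset.card_univ, Fintype.card_fin] at this
      omega
    · rw [Finset.disjoint_left]
      rintro x hx hx'
      rcases Finset.mem_image.1 hx with ⟨k, _, rfl⟩
      rcases Finset.mem_image.1 hx' with ⟨k', _, he⟩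
      have h1 := hrevval k'
      rw [he, hloval] at h1
      have := k.isLt; have := k'.isLt
      omega
  have hmemcases : ∀ A x, x ∈ bwd A → (∃ k, x = lo k) ∨ (∃ k, x = Fin.rev (lo k)) := by
    intro A x hx
    rw [hbwd, Finset.mem_union] at hx
    rcases hx with hx | hx
    · rcases Finset.mem_image.1 hx with ⟨k, _, rfl⟩; exact Or.inl ⟨k, rfl⟩
    · rcases Finset.mem_image.1 hx with ⟨k, _, rfl⟩; exact Or.inr ⟨k, rfl⟩
  rw [show (2:ℕ)^n = (Finset.univ : Finset (Finset (Fin n))).card by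
    rw [Finset.card_univ, Fintype.card_finset, Fintype.card_fin]]
  apply Finset.card_nbij' (i := fun I : Idx n => Finset.univ.filter fun k : Fin n => lo k ∈ I.1)
    (j := fun A => ⟨bwd A, hbcard A⟩)
  · intro I _; exact Finset.mem_univ _
  · intro A _
    rw [Finset.mem_coe, Finset.mem_filter]
    refine ⟨Finset.mem_univ _, ?_⟩
    intro i hi
    rcases hmemcases A i hi with ⟨k, rfl⟩ | ⟨k, rfl⟩
    · rw [hmemlow] at hi
      rw [hmemhigh]
      intro hc; exact hc hi
    · rw [hmemhigh] at hi
      rw [Fin.rev_rev, hmemlow]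
      exact hi
  · intro I hI
    rw [Finset.mem_coe, Finset.mem_filter] at hI
    apply Subtype.ext
    show bwd _ = I.1
    apply Finset.eq_of_subset_of_card_le
    · intro x hx
      have hx' := hx
      rcases hmemcases _ x hx with ⟨k, rfl⟩ | ⟨k, rfl⟩
      · rw [hmemlow, Finset.mem_filter] at hx'
        exact hx'.2
      · rw [hmemhigh, Finset.mem_filter] at hx'
        have hlk : lo k ∉ I.1 := fun hc => hx' ⟨Finset.mem_univ _, hc⟩
        have : lo k ∈ (I.1)ᶜ := Finset.mem_compl.2 hlk
        rw [compl_good hI.2] at this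
        rcases Finset.mem_image.1 this with ⟨j, hj, hje⟩
        rw [← hje, Fin.rev_rev]
        exact hj
    · rw [I.2, hbcard]
  · intro A _
    ext k
    rw [Finset.mem_filter]
    show (k ∈ Finset.univ ∧ lo k ∈ bwd A) ↔ k ∈ A
    rw [hmemlow]
    simp


/-- The trace of the endomorphism `A = S ∘ ⋀ⁿ(J_{2n})` of `⋀ⁿ(ℂ^{2n})` equals
`(-1)^{n + ⌊n/2⌋} · 2ⁿ`; in particular `tr(A) ≠ 0`. -/
theorem Amat_trace (n : ℕ) (hn : 1 ≤ n) :
    (Amat n).trace = (-1 : ℂ) ^ (n + n / 2) * 2 ^ n ∧ (Amat n).trace ≠ 0 := by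
  classical
  have htr : (Amat n).trace
      = ∑ I : Idx n, qCoeff n I (complIdx n I) * wedgePow n (JMat n) (complIdx n I) I := by
    rw [Matrix.trace]
    refine Finset.sum_congr rfl fun I _ => ?_
    rw [Matrix.diag_apply, Amat, Matrix.mul_apply]
    rw [Finset.sum_eq_single (complIdx n I)]
    · congr 1
      rw [Smat, if_pos (complIdx_involutive n I).symm, complIdx_involutive]
    · intro K _ hK
      rw [Smat, if_neg, zero_mul]
      intro h
      exact hK (by rw [h, complIdx_involutive])
    · intro h
      exact absurd (Finset.mem_univ _) h
  have hterm : ∀ I : Idx n,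
      qCoeff n I (complIdx n I) * wedgePow n (JMat n) (complIdx n I) I
        = if good n I then (-1:ℂ) ^ (n + n / 2) else 0 := by
    intro I
    by_cases h : good n I
    · rw [if_pos h, term_good h]
    · rw [if_neg h, term_bad h, mul_zero]
  have hsum : (Amat n).trace = (-1:ℂ) ^ (n + n / 2) * 2 ^ n := by
    rw [htr]
    simp_rw [hterm]
    rw [← Finset.sum_filter, Finset.sum_const, count_good n, nsmul_eq_mul]
    push_cast
    ring
  refine ⟨hsum, ?_⟩
  rw [hsum]
  apply mul_ne_zero
  · exact pow_ne_zero _ (by norm_num)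
  · exact pow_ne_zero _ (by norm_num)
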